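/- Let f : C ⥤ D be a functor between small categories. Then f is initial if and only if f is uniquely left orthogonal to every discrete opfibration: for every discrete opfibration π : X ⥤ Y and every pair of functors φ : C ⥤ X and ψ : D ⥤ Y with φ ⋙ π = f ⋙ ψ (strict equality of functors), there exists a unique functor h : D ⥤ X with f ⋙ h = φ and h ⋙ π = ψ. -/

import Mathlib

open CategoryTheory

universe u

/-- A functor `π : X ⥤ Y` is a discrete opfibration if for every object `x` of `X` and
every morphism `g : π x ⟶ y` of `Y` there is a unique morphism of `X` with domain `x`
lying over `g` (in particular, its codomain lies over `y`). -/
def IsDiscreteOpfibration {X : Type*} {Y : Type*} [Category X] [Category Y]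
    (π : X ⥤ Y) : Prop :=
  ∀ ⦃x : X⦄ ⦃y : Y⦄ (g : π.obj x ⟶ y),
    ∃! p : Σ x' : X, (x ⟶ x'),
      (⟨π.obj p.1, π.map p.2⟩ : Σ y' : Y, (π.obj x ⟶ y')) = ⟨y, g⟩

namespace DOFAux

section Lifts

variable {X Y : Type u} [SmallCategory X] [SmallCategory Y] {π : X ⥤ Y}

/-- The chosen lift of a morphism along a discrete opfibration. -/
noncomputable def L (hπ : IsDiscreteOpfibration π) {x : X} {y : Y} (g : π.obj x ⟶ y) :
    Σ x' : X, (x ⟶ x') :=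
  (hπ g).choose

lemma L_spec (hπ : IsDiscreteOpfibration π) {x : X} {y : Y} (g : π.obj x ⟶ y) :
    (⟨π.obj (L hπ g).1, π.map (L hπ g).2⟩ : Σ y' : Y, (π.obj x ⟶ y')) = ⟨y, g⟩ :=
  (hπ g).choose_spec.1

lemma L_obj (hπ : IsDiscreteOpfibration π) {x : X} {y : Y} (g : π.obj x ⟶ y) :
    π.obj (L hπ g).1 = y :=
  congrArg Sigma.fst (L_spec hπ g)

lemma L_map (hπ : IsDiscreteOpfibration π) {x : X} {y : Y} (g : π.obj x ⟶ y) :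
    π.map (L hπ g).2 = g ≫ eqToHom (L_obj hπ g).symm := by
  have h := (Sigma.mk.inj_iff.mp (L_spec hπ g)).2
  have := (conj_eqToHom_iff_heq (π.map (L hπ g).2) g rfl (L_obj hπ g)).mpr h
  simpa using this

lemma L_uniq (hπ : IsDiscreteOpfibration π) {x : X} {y : Y} (g : π.obj x ⟶ y)
    {x' : X} (p : x ⟶ x') (h1 : π.obj x' = y) (h2 : π.map p = g ≫ eqToHom h1.symm) :
    (⟨x', p⟩ : Σ x'' : X, (x ⟶ x'')) = L hπ g := by
  apply (hπ g).choose_spec.2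
  subst h1
  simp [h2]

/-- A discrete opfibration is faithful on morphisms over the same morphism. -/
lemma hom_ext (hπ : IsDiscreteOpfibration π) {x x' : X} (p q : x ⟶ x')
    (h : π.map p = π.map q) : p = q := by
  have h1 := L_uniq hπ (π.map q) p rfl (by simpa using h)
  have h2 := L_uniq hπ (π.map q) q rfl (by simp)
  exact eq_of_heq (Sigma.mk.inj_iff.mp (h1.trans h2.symm)).2

end Lifts

section Forward

variable {C D X Y : Type u} [SmallCategory C] [SmallCategory D]
  [SmallCategory X] [SmallCategory Y]
  (f : C ⥤ D) (π : X ⥤ Y) (hπ : IsDiscreteOpfibration π)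
  (φ : C ⥤ X) (ψ : D ⥤ Y) (hsq : φ ⋙ π = f ⋙ ψ)

include hsq

lemma eqo (c : C) : π.obj (φ.obj c) = ψ.obj (f.obj c) := Functor.congr_obj hsq c

lemma sqm {c c' : C} (t : c ⟶ c') :
    π.map (φ.map t) =
      eqToHom (eqo f π φ ψ hsq c) ≫ ψ.map (f.map t) ≫ eqToHom (eqo f π φ ψ hsq c').symm := by
  have := Functor.congr_hom hsq t
  simpa using this

/-- The morphism in `Y` to be lifted, associated to a costructured arrow. -/
def ge {d : D} (e : CostructuredArrow f d) : π.obj (φ.obj e.left) ⟶ ψ.obj d :=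
  eqToHom (eqo f π φ ψ hsq e.left) ≫ ψ.map e.hom

/-- The codomain of the chosen lift associated to a costructured arrow. -/
noncomputable def Xe {d : D} (e : CostructuredArrow f d) : X :=
  (L hπ (ge f π φ ψ hsq e)).1

/-- The chosen lift associated to a costructured arrow. -/
noncomputable def pe {d : D} (e : CostructuredArrow f d) :
    φ.obj e.left ⟶ Xe f π hπ φ ψ hsq e :=
  (L hπ (ge f π φ ψ hsq e)).2

lemma Xe_obj {d : D} (e : CostructuredArrow f d) :
    π.obj (Xe f π hπ φ ψ hsq e) = ψ.obj d :=
  L_obj hπ _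

lemma pe_map {d : D} (e : CostructuredArrow f d) :
    π.map (pe f π hπ φ ψ hsq e) = ge f π φ ψ hsq e ≫ eqToHom (Xe_obj f π hπ φ ψ hsq e).symm :=
  L_map hπ _

lemma Xe_const {d : D} [IsPreconnected (CostructuredArrow f d)]
    (e e' : CostructuredArrow f d) :
    Xe f π hπ φ ψ hsq e = Xe f π hπ φ ψ hsq e' := by
  apply constant_of_preserves_morphisms (fun e₁ : CostructuredArrow f d => Xe f π hπ φ ψ hsq e₁)
  intro e₁ e₂ t
  have h : (⟨Xe f π hπ φ ψ hsq e₂, φ.map t.left ≫ pe f π hπ φ ψ hsq e₂⟩ :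
      Σ x' : X, (φ.obj e₁.left ⟶ x')) = L hπ (ge f π φ ψ hsq e₁) := by
    apply L_uniq hπ _ _ (Xe_obj f π hπ φ ψ hsq e₂)
    rw [π.map_comp, sqm f π φ ψ hsq t.left, pe_map]
    have hw : f.map t.left ≫ e₂.hom = e₁.hom := CostructuredArrow.w t
    simp only [ge]
    rw [← hw, ψ.map_comp]
    simp
  exact (congrArg Sigma.fst h).symm

variable [f.Initial]

/-- The object part of the lifted functor. -/
noncomputable def Hobj (d : D) : X :=
  Xe f π hπ φ ψ hsq (Classical.arbitrary (CostructuredArrow f d))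

lemma Hobj_π (d : D) : π.obj (Hobj f π hπ φ ψ hsq d) = ψ.obj d :=
  Xe_obj f π hπ φ ψ hsq _

lemma Hobj_eq {d : D} (e : CostructuredArrow f d) :
    Xe f π hπ φ ψ hsq e = Hobj f π hπ φ ψ hsq d :=
  Xe_const f π hπ φ ψ hsq e _

/-- The chosen lift for the map part of the lifted functor. -/
noncomputable def HmapL {d d' : D} (u : d ⟶ d') :
    Σ x' : X, (Hobj f π hπ φ ψ hsq d ⟶ x') :=
  L hπ (eqToHom (Hobj_π f π hπ φ ψ hsq d) ≫ ψ.map u)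

lemma HmapL_obj {d d' : D} (u : d ⟶ d') :
    (HmapL f π hπ φ ψ hsq u).1 = Hobj f π hπ φ ψ hsq d' := by
  set e := Classical.arbitrary (CostructuredArrow f d) with he
  have h : (⟨(HmapL f π hπ φ ψ hsq u).1,
      pe f π hπ φ ψ hsq e ≫ (HmapL f π hπ φ ψ hsq u).2⟩ :
      Σ x' : X, (φ.obj e.left ⟶ x')) =
      L hπ (ge f π φ ψ hsq (CostructuredArrow.mk (e.hom ≫ u))) := by
    apply L_uniq hπ _ _ (L_obj hπ _)
    erw [π.map_comp, pe_map]
    unfold HmapL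
    erw [L_map]
    simp [ge]
    erw [Category.assoc, Category.assoc, Category.assoc, eqToHom_trans_assoc]
    simp
    erw [Category.id_comp]
    rfl
  have h2 := congrArg Sigma.fst h
  exact h2.trans (Hobj_eq f π hπ φ ψ hsq (CostructuredArrow.mk (e.hom ≫ u)))

lemma Hmap_π_raw {d d' : D} (u : d ⟶ d') :
    π.map ((HmapL f π hπ φ ψ hsq u).2 ≫ eqToHom (HmapL_obj f π hπ φ ψ hsq u)) =
      eqToHom (Hobj_π f π hπ φ ψ hsq d) ≫ ψ.map u ≫ eqToHom (Hobj_π f π hπ φ ψ hsq d').symm := by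
  rw [π.map_comp]
  unfold HmapL
  erw [L_map, eqToHom_map]
  simp

/-- The lifted functor `D ⥤ X`. -/
noncomputable def H : D ⥤ X where
  obj := Hobj f π hπ φ ψ hsq
  map u := (HmapL f π hπ φ ψ hsq u).2 ≫ eqToHom (HmapL_obj f π hπ φ ψ hsq u)
  map_id d := by
    apply hom_ext hπ
    rw [Hmap_π_raw]
    simp
  map_comp {a b c} u v := by
    apply hom_ext hπ
    rw [Hmap_π_raw, π.map_comp, Hmap_π_raw, Hmap_π_raw]
    simp

lemma H_map_π {d d' : D} (u : d ⟶ d') :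
    π.map ((H f π hπ φ ψ hsq).map u) =
      eqToHom (Hobj_π f π hπ φ ψ hsq d) ≫ ψ.map u ≫ eqToHom (Hobj_π f π hπ φ ψ hsq d').symm :=
  Hmap_π_raw f π hπ φ ψ hsq u

lemma Hobj_f (c : C) : Hobj f π hπ φ ψ hsq (f.obj c) = φ.obj c := by
  have h : (⟨φ.obj c, 𝟙 (φ.obj c)⟩ : Σ x' : X, (φ.obj c ⟶ x')) =
      L hπ (ge f π φ ψ hsq (CostructuredArrow.mk (𝟙 (f.obj c)))) := by
    apply L_uniq hπ _ _ (eqo f π φ ψ hsq c)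
    simp [ge]
  exact (Hobj_eq f π hπ φ ψ hsq (CostructuredArrow.mk (𝟙 (f.obj c)))).symm.trans
    (congrArg Sigma.fst h).symm

lemma H_comp_eq : f ⋙ H f π hπ φ ψ hsq = φ := by
  refine CategoryTheory.Functor.ext (fun c => Hobj_f f π hπ φ ψ hsq c) (fun c c' t => ?_)
  apply hom_ext hπ
  rw [Functor.comp_map, H_map_π]
  erw [π.map_comp, π.map_comp, eqToHom_map, eqToHom_map, sqm f π φ ψ hsq t]
  simp
  rfl

lemma H_over : H f π hπ φ ψ hsq ⋙ π = ψ := by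
  refine CategoryTheory.Functor.ext (fun d => Hobj_π f π hπ φ ψ hsq d) (fun d d' u => ?_)
  rw [Functor.comp_map, H_map_π]
  rfl

lemma H_uniq (h' : D ⥤ X) (hA : f ⋙ h' = φ) (hB : h' ⋙ π = ψ) :
    h' = H f π hπ φ ψ hsq := by
  have hobj : ∀ d : D, h'.obj d = Hobj f π hπ φ ψ hsq d := by
    intro d
    set e := Classical.arbitrary (CostructuredArrow f d) with he
    have hfc : h'.obj (f.obj e.left) = φ.obj e.left := Functor.congr_obj hA e.left
    have h1 : π.obj (h'.obj d) = ψ.obj d := Functor.congr_obj hB d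
    have h : (⟨h'.obj d, eqToHom hfc.symm ≫ h'.map e.hom⟩ :
        Σ x' : X, (φ.obj e.left ⟶ x')) = L hπ (ge f π φ ψ hsq e) := by
      apply L_uniq hπ _ _ h1
      rw [π.map_comp, eqToHom_map]
      have := Functor.congr_hom hB e.hom
      simp only [Functor.comp_map] at this
      rw [this]
      simp [ge]
    exact (congrArg Sigma.fst h).trans (Hobj_eq f π hπ φ ψ hsq e)
  refine CategoryTheory.Functor.ext hobj (fun d d' u => ?_)
  apply hom_ext hπ
  erw [π.map_comp, π.map_comp, eqToHom_map, eqToHom_map, H_map_π]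
  have := Functor.congr_hom hB u
  simp only [Functor.comp_map] at this
  rw [this]
  simp [H]
  erw [eqToHom_trans, eqToHom_trans_assoc]

end Forward

section Backward

variable {C D : Type u} [SmallCategory C] [SmallCategory D] (f : C ⥤ D)

lemma map_obj_eq {d d' : D} (g : d ⟶ d') (e : CostructuredArrow f d) :
    (CostructuredArrow.map g).obj e = CostructuredArrow.mk (e.hom ≫ g) := by
  conv_lhs => rw [CostructuredArrow.eq_mk e]
  rw [CostructuredArrow.map_mk]

/-- The functor of connected components of costructured arrow categories. -/
def Fc : D ⥤ Type u where
  obj d := ConnectedComponents (CostructuredArrow f d)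
  map g := TypeCat.ofHom (CostructuredArrow.map g).mapConnectedComponents
  map_id d := by
    ext x
    refine Quotient.inductionOn x (fun e => ?_)
    show Quotient.mk _ ((CostructuredArrow.map (𝟙 d)).obj e) = Quotient.mk _ e
    rw [map_obj_eq]
    exact Quotient.sound (Zigzag.of_hom (CostructuredArrow.homMk (𝟙 e.left) (by simp)))
  map_comp {a b c} g g' := by
    ext x
    refine Quotient.inductionOn x (fun e => ?_)
    show Quotient.mk _ ((CostructuredArrow.map (g ≫ g')).obj e) =
      Quotient.mk _ ((CostructuredArrow.map g').obj ((CostructuredArrow.map g).obj e))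
    rw [map_obj_eq, map_obj_eq, map_obj_eq]
    exact Quotient.sound (Zigzag.of_hom (CostructuredArrow.homMk (𝟙 e.left) (by simp)))

/-- The canonical functor `C ⥤ (Fc f).Elements`. -/
def φf : C ⥤ (Fc f).Elements where
  obj c := ⟨f.obj c, Quotient.mk _ (CostructuredArrow.mk (𝟙 (f.obj c)))⟩
  map {c c'} t := ⟨f.map t, by
    show (CostructuredArrow.map (f.map t)).mapConnectedComponents
        (Quotient.mk _ (CostructuredArrow.mk (𝟙 (f.obj c)))) =
      Quotient.mk _ (CostructuredArrow.mk (𝟙 (f.obj c')))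
    rw [Functor.mapConnectedComponents_mk, CostructuredArrow.map_mk]
    exact Quotient.sound (Zigzag.of_hom (CostructuredArrow.homMk t (by simp)))⟩
  map_id c := by
    apply CategoryOfElements.ext
    simp [CategoryOfElements.id_val]
    rfl
  map_comp {a b c} t t' := by
    apply CategoryOfElements.ext
    simp [CategoryOfElements.comp_val]
    rfl

lemma pair_eq {F : D ⥤ Type u} {x : F.Elements} (p q : Σ x' : F.Elements, (x ⟶ x'))
    (h1 : p.1.1 = q.1.1) (h2 : p.2.val = q.2.val ≫ eqToHom h1.symm) : p = q := by
  obtain ⟨⟨a, s⟩, ⟨u, hu⟩⟩ := p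
  obtain ⟨⟨b, t⟩, ⟨v, hv⟩⟩ := q
  dsimp at h1
  subst h1
  rw [eqToHom_refl, Category.comp_id] at h2
  dsimp at h2
  subst h2
  obtain rfl : s = t := hu.symm.trans hv
  rfl

lemma Fc_opfib : IsDiscreteOpfibration (CategoryOfElements.π (Fc f)) := by
  intro x y g
  refine ⟨⟨⟨y, (Fc f).map g x.2⟩, ⟨g, rfl⟩⟩, rfl, ?_⟩
  intro p hp
  obtain ⟨h1, h2⟩ := Sigma.mk.inj_iff.mp hp
  refine pair_eq p _ h1 ?_
  have := (conj_eqToHom_iff_heq ((CategoryOfElements.π (Fc f)).map p.2) g rfl h1).mpr h2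
  simp at this; exact this

end Backward

end DOFAux

open DOFAux in
/-- A functor `f : C ⥤ D` between small categories is initial if and only if it is
uniquely left orthogonal to every discrete opfibration `π : X ⥤ Y`: every strictly
commuting square `φ ⋙ π = f ⋙ ψ` admits a unique diagonal filler `h : D ⥤ X` with
`f ⋙ h = φ` and `h ⋙ π = ψ`. -/
theorem initial_iff_unique_lifting_against_discrete_opfibrations
    {C D : Type u} [SmallCategory C] [SmallCategory D] (f : C ⥤ D) :
    f.Initial ↔
      ∀ {X Y : Type u} [SmallCategory X] [SmallCategory Y] (π : X ⥤ Y),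
        IsDiscreteOpfibration π →
        ∀ (φ : C ⥤ X) (ψ : D ⥤ Y), φ ⋙ π = f ⋙ ψ →
          ∃! h : D ⥤ X, f ⋙ h = φ ∧ h ⋙ π = ψ := by
  constructor
  · intro hI X Y _ _ π hπ φ ψ hsq
    refine ⟨H f π hπ φ ψ hsq, ⟨H_comp_eq f π hπ φ ψ hsq, H_over f π hπ φ ψ hsq⟩, ?_⟩
    rintro h' ⟨hA, hB⟩
    exact H_uniq f π hπ φ ψ hsq h' hA hB
  · intro hlift
    obtain ⟨h, ⟨hA, hB⟩, -⟩ := hlift (CategoryOfElements.π (Fc f)) (Fc_opfib f) (φf f) (𝟭 D) rfl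
    have key : ∀ (d : D) {c : C} (g : f.obj c ⟶ d),
        h.obj d = ⟨d, Quotient.mk _ (CostructuredArrow.mk g)⟩ := by
      intro d c g
      have hfc : h.obj (f.obj c) = (φf f).obj c := Functor.congr_obj hA c
      have hd : (h.obj d).1 = d := Functor.congr_obj hB d
      set m : (φf f).obj c ⟶ h.obj d := eqToHom hfc.symm ≫ h.map g with hm
      have hval : m.val = g ≫ eqToHom hd.symm := by
        have h1 := Functor.congr_hom hB g
        simp only [Functor.comp_map, Functor.id_map] at h1
        show (CategoryOfElements.π (Fc f)).map m = _
        rw [hm, Functor.map_comp, eqToHom_map, h1]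
        simp
        erw [eqToHom_refl, Category.id_comp]
        rfl
      have hs : (Fc f).map m.val ((φf f).obj c).2 = (h.obj d).2 := m.property
      rw [hval] at hs
      refine Functor.Elements.ext _ _ hd ?_
      erw [← hs, ← FunctorToTypes.map_comp_apply]
      erw [Category.assoc, eqToHom_trans, eqToHom_refl, Category.comp_id]
      show (CostructuredArrow.map g).mapConnectedComponents
          (Quotient.mk _ (CostructuredArrow.mk (𝟙 (f.obj c)))) = _
      rw [Functor.mapConnectedComponents_mk, CostructuredArrow.map_mk]
      exact Quotient.sound (Zigzag.of_hom (CostructuredArrow.homMk (𝟙 c) (by simp)))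
    constructor
    intro d
    have hne : Nonempty (CostructuredArrow f d) := by
      have hd : (h.obj d).1 = d := Functor.congr_obj hB d
      have s : ConnectedComponents (CostructuredArrow f d) := (Fc f).map (eqToHom hd) (h.obj d).2
      obtain ⟨e, -⟩ := Quotient.exists_rep s
      exact ⟨e⟩
    have : ∀ e₁ e₂ : CostructuredArrow f d, Zigzag e₁ e₂ := by
      intro e₁ e₂
      have h1 := key d e₁.hom
      have h2 := key d e₂.hom
      have h3 := h1.symm.trans h2
      have h4 := (Sigma.mk.inj_iff.mp h3).2
      have h5 : (Quotient.mk _ (CostructuredArrow.mk e₁.hom) :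
          ConnectedComponents (CostructuredArrow f d)) =
          Quotient.mk _ (CostructuredArrow.mk e₂.hom) := eq_of_heq h4
      have h6 := Quotient.exact h5
      rw [← CostructuredArrow.eq_mk e₁, ← CostructuredArrow.eq_mk e₂] at h6
      exact h6
    exact @zigzag_isConnected _ _ hne this
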